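/- For every ε > 0 there exists an integer k ≥ 3 such that for the instance I_k the following hold simultaneously: (a) there exists a multi-commodity flow over time (storage permitted) with time horizon k+1; (b) every multi-commodity flow over time without intermediate storage has time horizon strictly greater than 2k−2; and (c) 2k−2 > (2−ε)·(k+1). Consequently, the ratio between the optimal time horizon without intermediate storage and the optimal time horizon with storage can be made larger than 2−ε for any ε > 0; i.e., the speed-up through storage for quickest multi-commodity flows can be arbitrarily close to the factor 2. -/

import Mathlib

open MeasureTheory Set

/-- A multi-commodity flow over time with time horizon `T` for the cycle instance with `k` nodes
`v_0, …, v_{k-1}`, arcs `a_j = (v_j, v_{(j+1) % k})` of unit capacity and unit transit time,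
`k` commodities where commodity `i` has source `v_i`, sink `v_{(i-1) % k}` and demand `d i`.
`f i j` is the flow rate function of commodity `i` into arc `a_j`. -/
def IsMCFlow (k : ℕ) (T : ℝ) (d : ℕ → ℝ) (f : ℕ → ℕ → ℝ → ℝ) : Prop :=
  -- positive time horizon
  0 < T ∧
  -- integrable flow rate functions
  (∀ i < k, ∀ j < k, Integrable (f i j)) ∧
  -- nonnegative flow rates
  (∀ i < k, ∀ j < k, ∀ θ : ℝ, 0 ≤ f i j θ) ∧
  -- flow rates vanish outside [0, T)
  (∀ i < k, ∀ j < k, ∀ θ : ℝ, θ ∉ Ico (0 : ℝ) T → f i j θ = 0) ∧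
  -- capacity constraints, for almost every time
  (∀ j < k, ∀ᵐ θ : ℝ, ∑ i ∈ Finset.range k, f i j θ ≤ 1) ∧
  -- weak flow conservation: flow can only emerge from the source `v_i` of commodity `i`;
  -- node `v_m` has unique incoming arc `a_{(m-1) % k}` and unique outgoing arc `a_m`
  (∀ i < k, ∀ m < k, m ≠ i → ∀ θ ∈ Ico (0 : ℝ) T,
    0 ≤ (∫ ξ in (0 : ℝ)..(θ - 1), f i ((m + k - 1) % k) ξ) -
        ∫ ξ in (0 : ℝ)..θ, f i m ξ) ∧
  -- demands are fulfilled at time `T`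
  (∀ i < k, ∀ m < k,
    (∫ ξ in (0 : ℝ)..(T - 1), f i ((m + k - 1) % k) ξ) -
        (∫ ξ in (0 : ℝ)..T, f i m ξ) =
      if m = (i + k - 1) % k then d i
      else if m = i then -d i
      else 0)

/-- The flow is without intermediate storage: flow conservation holds with equality at every
node other than the source `v_i` and the sink `v_{(i-1) % k}` of each commodity `i`. -/
def NoStorage (k : ℕ) (T : ℝ) (f : ℕ → ℕ → ℝ → ℝ) : Prop :=
  ∀ i < k, ∀ m < k, m ≠ i → m ≠ (i + k - 1) % k → ∀ θ ∈ Ico (0 : ℝ) T,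
    (∫ ξ in (0 : ℝ)..(θ - 1), f i ((m + k - 1) % k) ξ) =
      ∫ ξ in (0 : ℝ)..θ, f i m ξ

/-- The demands of the instance `I_k`: commodity `0` has demand `2`,
all other commodities have demand `1`. -/
noncomputable def demandI (i : ℕ) : ℝ := if i = 0 then 2 else 1

lemma vol_inter (a b θ : ℝ) (h0 : 0 ≤ a) (hab : a ≤ b) :
    (volume (Ioc 0 θ ∩ Ico a b)).toReal = max (min θ b - a) 0 := by
  have hsub1 : Ioo a (min θ b) ⊆ Ioc 0 θ ∩ Ico a b := by
    intro x hx
    rcases hx with ⟨h1, h2⟩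
    refine ⟨⟨lt_of_le_of_lt h0 h1, le_of_lt (lt_of_lt_of_le h2 (min_le_left _ _))⟩,
      le_of_lt h1, lt_of_lt_of_le h2 (min_le_right _ _)⟩
  have hsub2 : Ioc 0 θ ∩ Ico a b ⊆ Icc a (min θ b) := by
    intro x hx
    exact ⟨hx.2.1, le_min hx.1.2 (le_of_lt hx.2.2)⟩
  have h1 := measure_mono (μ := volume) hsub1
  have h2 := measure_mono (μ := volume) hsub2
  rw [Real.volume_Ioo] at h1
  rw [Real.volume_Icc] at h2
  have : volume (Ioc 0 θ ∩ Ico a b) = ENNReal.ofReal (min θ b - a) :=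
    le_antisymm h2 h1
  rw [this]
  rcases le_total (min θ b - a) 0 with h | h
  · rw [ENNReal.ofReal_eq_zero.2 h, ENNReal.toReal_zero, max_eq_right h]
  · rw [ENNReal.toReal_ofReal h, max_eq_left h]

lemma integral_ind (a b θ : ℝ) (h0 : 0 ≤ a) (hab : a ≤ b) :
    ∫ ξ in (0:ℝ)..θ, (Ico a b).indicator (fun _ => (1:ℝ)) ξ
      = min (max (θ - a) 0) (b - a) := by
  rcases le_total 0 θ with hθ | hθ
  · rw [intervalIntegral.integral_of_le hθ, setIntegral_indicator measurableSet_Ico,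
      setIntegral_const, smul_eq_mul, mul_one, measureReal_def, vol_inter a b θ h0 hab]
    simp only [min_def, max_def]
    split_ifs <;> linarith
  · rw [intervalIntegral.integral_symm, intervalIntegral.integral_of_le hθ,
      setIntegral_indicator measurableSet_Ico]
    have hsub : Ioc θ 0 ∩ Ico a b ⊆ Icc a (min 0 b) := by
      intro x hx; exact ⟨hx.2.1, le_min hx.1.2 (le_of_lt hx.2.2)⟩
    have hv : volume (Ioc θ 0 ∩ Ico a b) = 0 := by
      refine le_antisymm ?_ (zero_le)
      calc volume (Ioc θ 0 ∩ Ico a b) ≤ volume (Icc a (min 0 b)) := measure_mono hsub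
        _ = ENNReal.ofReal (min 0 b - a) := Real.volume_Icc
        _ = 0 := ENNReal.ofReal_eq_zero.2 (by simp only [min_def]; split_ifs <;> linarith)
    rw [setIntegral_const, smul_eq_mul, mul_one, measureReal_def, hv, ENNReal.toReal_zero, neg_zero]
    simp only [min_def, max_def]
    split_ifs <;> linarith

def stt (k i j : ℕ) : ℕ :=
  if i = 0 then j else if j = k-1 then k-i else if i ≤ j then j-i else j+k+1-i
def ett (k i j : ℕ) : ℕ :=
  if i = 0 then (if j = k-1 then 0 else 2) else if j = i-1 then 0 else 1

lemma modk (k m : ℕ) (hk : 3 ≤ k) (hm : m < k) :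
    (m + k - 1) % k = if m = 0 then k-1 else m-1 := by
  rcases Nat.eq_zero_or_pos m with h | h
  · subst h
    rw [if_pos rfl]
    simpa using Nat.mod_eq_of_lt (show k - 1 < k by omega)
  · rw [if_neg (by omega)]
    have h2 : m + k - 1 = (m-1) + k := by omega
    rw [h2, Nat.add_mod_right, Nat.mod_eq_of_lt (by omega)]

lemma N1 (k i j : ℕ) (hk : 3 ≤ k) (hi : i < k) (hj : j < k) :
    stt k i j + ett k i j ≤ k := by
  simp only [stt, ett]; split_ifs <;> omega

lemma N5 (k i : ℕ) (hk : 3 ≤ k) (hi : i < k) : ett k i ((i + k - 1) % k) = 0 := by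
  rw [modk k i hk hi]
  simp only [ett]; split_ifs <;> omega

lemma N2 (k i m : ℕ) (hk : 3 ≤ k) (hi : i < k) (hm : m < k) (h1 : m ≠ i)
    (h2 : m ≠ (i + k - 1) % k) :
    ett k i m = ett k i ((m + k - 1) % k) ∧
    stt k i ((m + k - 1) % k) + 1 ≤ stt k i m := by
  rw [modk k i hk hi] at h2
  rw [modk k m hk hm]
  simp only [stt, ett]
  split_ifs at h2 ⊢ <;> omega

lemma N3 (k i₁ i₂ j : ℕ) (hk : 3 ≤ k) (h1 : i₁ < k) (h2 : i₂ < k) (hj : j < k)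
    (hne : i₁ ≠ i₂) :
    stt k i₁ j + ett k i₁ j ≤ stt k i₂ j ∨ stt k i₂ j + ett k i₂ j ≤ stt k i₁ j ∨
    ett k i₁ j = 0 ∨ ett k i₂ j = 0 := by
  simp only [stt, ett]; split_ifs <;> omega

lemma N7 (k i j : ℕ) (hk : 3 ≤ k) (hi : i < k) (hj : j < k) :
    ett k i j = if j = (i + k - 1) % k then 0 else (if i = 0 then 2 else 1) := by
  rw [modk k i hk hi]
  simp only [ett]; split_ifs <;> omega

lemma N8 (k i m : ℕ) (hk : 3 ≤ k) (hi : i < k) (hm : m < k) :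
    ((m + k - 1) % k = (i + k - 1) % k) ↔ m = i := by
  rw [modk k m hk hm, modk k i hk hi]
  split_ifs <;> omega

lemma N9 (k i : ℕ) (hk : 3 ≤ k) (hi : i < k) : (i + k - 1) % k ≠ i := by
  rw [modk k i hk hi]; split_ifs <;> omega

noncomputable def flo (k i j : ℕ) : ℝ → ℝ :=
  (Ico (stt k i j : ℝ) ((stt k i j : ℝ) + ett k i j)).indicator (fun _ => 1)

lemma flo_int (k i j : ℕ) (θ : ℝ) :
    ∫ ξ in (0:ℝ)..θ, flo k i j ξ
      = min (max (θ - stt k i j) 0) (ett k i j) := by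
  rw [flo, integral_ind _ _ θ (Nat.cast_nonneg _)
    (le_add_of_nonneg_right (Nat.cast_nonneg _)), add_sub_cancel_left]

lemma flo_integrable (k i j : ℕ) : Integrable (flo k i j) := by
  rw [flo, integrable_indicator_iff measurableSet_Ico]
  exact integrableOn_const (by simp [Real.volume_Ico])

lemma flo_nonneg (k i j : ℕ) (θ : ℝ) : 0 ≤ flo k i j θ :=
  Set.indicator_apply_nonneg fun _ => zero_le_one

lemma flo_le_one (k i j : ℕ) (θ : ℝ) : flo k i j θ ≤ 1 := by
  rw [flo]
  by_cases h : θ ∈ Ico ((stt k i j : ℝ)) ((stt k i j : ℝ) + ett k i j)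
  · rw [indicator_of_mem h]
  · rw [indicator_of_notMem h]; norm_num

lemma flo_integrable' (a b : ℝ) : MeasureTheory.Integrable ((Ico a b).indicator (fun _ => (1:ℝ))) := by
  rw [integrable_indicator_iff measurableSet_Ico]
  exact integrableOn_const (by simp [Real.volume_Ico])

lemma exists_flow (k : ℕ) (hk : 3 ≤ k) : ∃ f, IsMCFlow k ((k:ℝ)+1) demandI f := by
  refine ⟨flo k, by positivity, fun i _ j _ => flo_integrable k i j,
    fun i _ j _ θ => flo_nonneg k i j θ, ?_, ?_, ?_, ?_⟩
  · -- vanish outside [0, k+1)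
    intro i hi j hj θ hθ
    rw [flo]
    refine indicator_of_notMem (fun hmem => hθ ⟨le_trans (Nat.cast_nonneg _) hmem.1, ?_⟩) _
    refine lt_of_lt_of_le hmem.2 ?_
    have := N1 k i j hk hi hj
    have : (stt k i j : ℝ) + ett k i j ≤ k := by exact_mod_cast this
    linarith
  · -- capacity
    intro j hj
    refine Filter.Eventually.of_forall (fun θ => ?_)
    by_cases hex : ∀ i ∈ Finset.range k, flo k i j θ = 0
    · rw [Finset.sum_eq_zero hex]; norm_num
    · push_neg at hex
      obtain ⟨i₀, hi₀, hne⟩ := hex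
      have hmem₀ : θ ∈ Ico ((stt k i₀ j : ℝ)) ((stt k i₀ j : ℝ) + ett k i₀ j) := by
        by_contra h; exact hne (indicator_of_notMem h _)
      rw [Finset.sum_eq_single_of_mem i₀ hi₀ ?_]
      · exact flo_le_one k i₀ j θ
      · intro i hi hne'
        by_contra hne2
        have hmem : θ ∈ Ico ((stt k i j : ℝ)) ((stt k i j : ℝ) + ett k i j) := by
          by_contra h; exact hne2 (indicator_of_notMem h _)
        have q1 : (stt k i j : ℝ) < (stt k i₀ j : ℝ) + ett k i₀ j :=
          lt_of_le_of_lt hmem.1 hmem₀.2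
        have q2 : (stt k i₀ j : ℝ) < (stt k i j : ℝ) + ett k i j :=
          lt_of_le_of_lt hmem₀.1 hmem.2
        have q1' : stt k i j < stt k i₀ j + ett k i₀ j := by exact_mod_cast q1
        have q2' : stt k i₀ j < stt k i j + ett k i j := by exact_mod_cast q2
        have e1 : ett k i j ≠ 0 := by
          have h3 : (stt k i j : ℝ) < (stt k i j : ℝ) + ett k i j :=
            lt_of_le_of_lt hmem.1 hmem.2
          have h4 : (0:ℝ) < ett k i j := by linarith
          have : 0 < ett k i j := by exact_mod_cast h4
          omega
        have e2 : ett k i₀ j ≠ 0 := by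
          have h3 : (stt k i₀ j : ℝ) < (stt k i₀ j : ℝ) + ett k i₀ j :=
            lt_of_le_of_lt hmem₀.1 hmem₀.2
          have h4 : (0:ℝ) < ett k i₀ j := by linarith
          have : 0 < ett k i₀ j := by exact_mod_cast h4
          omega
        rcases N3 k i i₀ j hk (Finset.mem_range.1 hi) (Finset.mem_range.1 hi₀) hj hne' with
          h | h | h | h <;> omega
  · -- weak conservation
    intro i hi m hm hmi θ _
    rw [flo_int, flo_int]
    by_cases hsink : m = (i + k - 1) % k
    · have hz : ett k i m = 0 := by rw [N7 k i m hk hi hm, if_pos hsink]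
      rw [hz]
      have A : (0:ℝ) ≤ min (max (θ - 1 - stt k i ((m + k - 1) % k)) 0)
          (ett k i ((m + k - 1) % k)) := le_min (le_max_right _ _) (Nat.cast_nonneg _)
      have B : min (max (θ - stt k i m) 0) ((0:ℕ):ℝ) = 0 := by
        rw [Nat.cast_zero]; exact min_eq_right (le_max_right _ _)
      linarith
    · obtain ⟨he, hs⟩ := N2 k i m hk hi hm hmi hsink
      rw [he]
      have hs' : (stt k i ((m + k - 1) % k) : ℝ) + 1 ≤ stt k i m := by exact_mod_cast hs
      simp only [min_def, max_def]
      split_ifs <;> linarith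
  · -- demands
    intro i hi m hm
    have hm' : (m + k - 1) % k < k := Nat.mod_lt _ (by omega)
    rw [flo_int, flo_int]
    have key : ∀ j, j < k → ∀ x : ℝ, (k:ℝ) ≤ x →
        min (max (x - stt k i j) 0) (ett k i j) = ett k i j := by
      intro j hj x hx
      have h1 : stt k i j + ett k i j ≤ k := N1 k i j hk hi hj
      have h1' : (stt k i j : ℝ) + ett k i j ≤ k := by exact_mod_cast h1
      have h2 : (ett k i j : ℝ) ≤ x - stt k i j := by linarith
      rw [max_eq_left (le_trans (Nat.cast_nonneg _) h2), min_eq_right h2]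
    have e1 : ((k:ℝ) + 1) - 1 = (k:ℝ) := by ring
    rw [e1, key _ hm' _ (le_refl _), key _ hm _ (by linarith)]
    rw [N7 k i m hk hi hm, N7 k i _ hk hi hm']
    have hN8 := N8 k i m hk hi hm
    simp only [hN8]
    by_cases hmi : m = i
    · subst hmi
      have hne : m ≠ (m + k - 1) % k := fun h => (N9 k m hk hm) h.symm
      simp only [if_pos rfl, if_neg hne, demandI]
      split_ifs <;> norm_num
    · simp only [if_neg hmi]
      by_cases h2 : m = (i + k - 1) % k
      · simp only [if_pos h2, demandI]
        split_ifs <;> norm_num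
      · simp only [if_neg h2]
        simp

lemma modsmall (k x : ℕ) (hk : 0 < k) (h : x < 2*k) :
    x % k = if x < k then x else x - k := by
  split_ifs with h1
  · exact Nat.mod_eq_of_lt h1
  · rw [Nat.mod_eq_sub_mod (by omega), Nat.mod_eq_of_lt (by omega)]

lemma no_storage_bound (k : ℕ) (hk : 3 ≤ k) (T : ℝ) (f : ℕ → ℕ → ℝ → ℝ)
    (hf : IsMCFlow k T demandI f) (hns : NoStorage k T f) : 2*(k:ℝ) - 2 < T := by
  obtain ⟨hT, hInt, hNon, hVan, hCap, hCons, hDem⟩ := hf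
  by_contra hle
  push_neg at hle
  -- cumulative flows
  set F : ℕ → ℕ → ℝ → ℝ := fun i j θ => ∫ ξ in (0:ℝ)..θ, f i j ξ with hFdef
  have hmono : ∀ i < k, ∀ j < k, ∀ θ' θ : ℝ, θ' ≤ θ → F i j θ' ≤ F i j θ := by
    intro i hi j hj θ' θ h
    have hadd : F i j θ' + ∫ ξ in θ'..θ, f i j ξ = F i j θ :=
      intervalIntegral.integral_add_adjacent_intervals
        (hInt i hi j hj).intervalIntegrable (hInt i hi j hj).intervalIntegrable
    have hpos : 0 ≤ ∫ ξ in θ'..θ, f i j ξ :=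
      intervalIntegral.integral_nonneg h (fun x _ => hNon i hi j hj x)
    linarith
  have hzero : ∀ i < k, ∀ j < k, ∀ θ : ℝ, θ ≤ 0 → F i j θ = 0 := by
    intro i hi j hj θ h
    have h0 : ∀ᵐ ξ : ℝ, ξ ∉ ({0} : Set ℝ) :=
      (MeasureTheory.measure_eq_zero_iff_ae_notMem (μ := volume)).1 (by simp)
    rw [hFdef]
    simp only
    rw [intervalIntegral.integral_symm, intervalIntegral.integral_of_le h]
    have : ∫ ξ in Ioc θ 0, f i j ξ = ∫ ξ in Ioc θ 0, (0:ℝ) := by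
      refine setIntegral_congr_ae measurableSet_Ioc ?_
      filter_upwards [h0] with ξ hξ hmem
      refine hVan i hi j hj ξ (fun hIco => ?_)
      exact hξ (le_antisymm hmem.2 hIco.1)
    rw [this]
    simp
  have hF0 : ∀ i < k, ∀ j < k, F i j 0 = 0 := fun i hi j hj => hzero i hi j hj 0 le_rfl
  have hFnn : ∀ i < k, ∀ j < k, ∀ θ : ℝ, 0 ≤ θ → 0 ≤ F i j θ := by
    intro i hi j hj θ h
    rw [← hF0 i hi j hj]
    exact hmono i hi j hj 0 θ h
  -- the chain identity from no-storage
  have hchain : ∀ i < k, ∀ p, p ≤ k - 2 → ∀ θ : ℝ, θ < T →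
      F i ((i + p) % k) θ = F i i (θ - p) := by
    intro i hi p
    induction p with
    | zero =>
      intro _ θ _
      rw [Nat.add_zero, Nat.mod_eq_of_lt hi]
      norm_num
    | succ p ih =>
      intro hp θ hθ
      have hp' : p ≤ k - 2 := by omega
      have hmlt : (i + (p+1)) % k < k := Nat.mod_lt _ (by omega)
      have hiplt : (i + p) % k < k := Nat.mod_lt _ (by omega)
      have e1 : (i + (p+1)) % k = if i + (p+1) < k then i + (p+1) else i + (p+1) - k :=
        modsmall k _ (by omega) (by omega)
      have e2 : (i + p) % k = if i + p < k then i + p else i + p - k :=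
        modsmall k _ (by omega) (by omega)
      have e3 : (i + k - 1) % k = if i = 0 then k-1 else i-1 := modk k i hk hi
      rcases lt_or_ge θ 0 with hneg | hpos
      · rw [hzero i hi _ hmlt θ (le_of_lt hneg),
          hzero i hi i hi _ (by push_cast; linarith)]
      · have hprev : ((i + (p+1)) % k + k - 1) % k = (i + p) % k := by
          rw [modk k _ hk hmlt, e1, e2]
          split_ifs <;> first | contradiction | omega
        have hne1 : (i + (p+1)) % k ≠ i := by rw [e1]; split_ifs <;> omega
        have hne2 : (i + (p+1)) % k ≠ (i + k - 1) % k := by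
          rw [e1, e3]; split_ifs <;> omega
        have := hns i hi _ hmlt hne1 hne2 θ ⟨hpos, hθ⟩
        rw [hprev] at this
        rw [hFdef]
        simp only
        rw [← this]
        have := ih hp' (θ - 1) (by linarith)
        rw [hFdef] at this
        simp only at this
        rw [this]
        congr 1
        push_cast
        ring
  -- demand equations
  have hsinklt : ∀ i < k, (i + k - 1) % k < k := fun i _ => Nat.mod_lt _ (by omega)
  have hGsink : ∀ i < k, F i i (T - ((k:ℝ) - 1)) = demandI i + F i ((i + k - 1) % k) T := by
    intro i hi
    have hd := hDem i hi ((i + k - 1) % k) (hsinklt i hi)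
    rw [if_pos rfl] at hd
    have hprev : ((i + k - 1) % k + k - 1) % k = (i + (k-2)) % k := by
      rw [modk k _ hk (hsinklt i hi), modk k i hk hi]
      have e2 : (i + (k-2)) % k = if i + (k-2) < k then i + (k-2) else i + (k-2) - k :=
        modsmall k _ (by omega) (by omega)
      rw [e2]; split_ifs <;> omega
    rw [hprev] at hd
    have hc := hchain i hi (k-2) le_rfl (T-1) (by linarith)
    rw [hFdef] at hc; simp only at hc
    rw [hc] at hd
    have ecast : T - 1 - ((k-2:ℕ):ℝ) = T - ((k:ℝ) - 1) := by
      have : ((k-2:ℕ):ℝ) = (k:ℝ) - 2 := by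
        have : (2:ℕ) ≤ k := by omega
        push_cast [this]
        ring
      rw [this]; ring
    rw [ecast] at hd
    rw [hFdef]; simp only
    linarith [hd]
  have hGsrc : ∀ i < k, F i i T = demandI i + F i ((i + k - 1) % k) (T - 1) := by
    intro i hi
    have hd := hDem i hi i hi
    have hne : i ≠ (i + k - 1) % k := by
      rw [modk k i hk hi]; split_ifs <;> omega
    rw [if_neg hne, if_pos rfl] at hd
    have hprev : (i + k - 1) % k = (i + k - 1) % k := rfl
    rw [hFdef]; simp only
    linarith [hd]
  -- k - 1 < T
  have hklt : (k:ℝ) - 1 < T := by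
    by_contra hc
    push_neg at hc
    have h1 := hGsink 0 (by omega)
    have h2 : F 0 0 (T - ((k:ℝ)-1)) = 0 := hzero 0 (by omega) 0 (by omega) _ (by linarith)
    have h3 : 0 ≤ F 0 ((0 + k - 1) % k) T := hFnn 0 (by omega) _ (hsinklt 0 (by omega)) T (le_of_lt hT)
    have hd0 : demandI 0 = 2 := by simp [demandI]
    rw [h2, hd0] at h1
    linarith
  -- G i (k-1) ≥ demand i
  have hGk1 : ∀ i < k, demandI i ≤ F i i ((k:ℝ) - 1) := by
    intro i hi
    have hW : 0 ≤ F i ((i + k - 1) % k) T := hFnn i hi _ (hsinklt i hi) T (le_of_lt hT)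
    have hW2 : F i ((i + k - 1) % k) (T - 1) ≤ F i ((i + k - 1) % k) T :=
      hmono i hi _ (hsinklt i hi) _ _ (by linarith)
    have h1 := hGsink i hi
    have h2 := hGsrc i hi
    have h3 : F i i (T - ((k:ℝ)-1)) ≤ F i i ((k:ℝ)-1) :=
      hmono i hi i hi _ _ (by linarith)
    have h4 : F i i ((k:ℝ)-1) ≤ F i i T := hmono i hi i hi _ _ (by linarith)
    linarith
  -- capacity over the window [k-2, k-1]
  have hcapw : ∀ j < k, ∑ i ∈ Finset.range k, (F i j ((k:ℝ)-1) - F i j ((k:ℝ)-2)) ≤ 1 := by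
    intro j hj
    have hsint : ∀ i ∈ Finset.range k, IntervalIntegrable (f i j) volume ((k:ℝ)-2) ((k:ℝ)-1) :=
      fun i hi => (hInt i (Finset.mem_range.1 hi) j hj).intervalIntegrable
    have hswap : ∫ ξ in ((k:ℝ)-2)..((k:ℝ)-1), (∑ i ∈ Finset.range k, f i j ξ)
        = ∑ i ∈ Finset.range k, ∫ ξ in ((k:ℝ)-2)..((k:ℝ)-1), f i j ξ := by
      exact intervalIntegral.integral_finset_sum hsint
    have hbound : ∫ ξ in ((k:ℝ)-2)..((k:ℝ)-1), (∑ i ∈ Finset.range k, f i j ξ) ≤ 1 := by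
      have hmi : IntervalIntegrable (fun ξ => ∑ i ∈ Finset.range k, f i j ξ) volume ((k:ℝ)-2) ((k:ℝ)-1) :=
        (integrable_finset_sum _ (fun i hi => hInt i (Finset.mem_range.1 hi) j hj)).intervalIntegrable
      have := intervalIntegral.integral_mono_ae (by linarith : ((k:ℝ)-2) ≤ (k:ℝ)-1)
        hmi (intervalIntegrable_const (c := (1:ℝ))) (hCap j hj)
      rw [intervalIntegral.integral_const, smul_eq_mul, mul_one] at this
      linarith
    have hdecomp : ∀ i < k, ∫ ξ in ((k:ℝ)-2)..((k:ℝ)-1), f i j ξ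
        = F i j ((k:ℝ)-1) - F i j ((k:ℝ)-2) := by
      intro i hi
      have := intervalIntegral.integral_add_adjacent_intervals
        (a := (0:ℝ)) (b := (k:ℝ)-2) (c := (k:ℝ)-1)
        (hInt i hi j hj).intervalIntegrable (hInt i hi j hj).intervalIntegrable
      rw [hFdef]; simp only
      linarith
    calc ∑ i ∈ Finset.range k, (F i j ((k:ℝ)-1) - F i j ((k:ℝ)-2))
        = ∑ i ∈ Finset.range k, ∫ ξ in ((k:ℝ)-2)..((k:ℝ)-1), f i j ξ := by
          refine Finset.sum_congr rfl (fun i hi => ?_)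
          rw [hdecomp i (Finset.mem_range.1 hi)]
      _ = ∫ ξ in ((k:ℝ)-2)..((k:ℝ)-1), (∑ i ∈ Finset.range k, f i j ξ) := hswap.symm
      _ ≤ 1 := hbound
  -- telescoping lower bound
  have htele : ∀ i < k, demandI i ≤ ∑ j ∈ Finset.range k, (F i j ((k:ℝ)-1) - F i j ((k:ℝ)-2)) := by
    intro i hi
    have hterm : ∀ j < k, 0 ≤ F i j ((k:ℝ)-1) - F i j ((k:ℝ)-2) := by
      intro j hj
      have := hmono i hi j hj ((k:ℝ)-2) ((k:ℝ)-1) (by linarith)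
      linarith
    have hsub : (Finset.range (k-1)).image (fun p => (i + p) % k) ⊆ Finset.range k := by
      intro x hx
      simp only [Finset.mem_image, Finset.mem_range] at hx ⊢
      obtain ⟨p, _, hpx⟩ := hx
      rw [← hpx]; exact Nat.mod_lt _ (by omega)
    have hinj : ∀ p ∈ Finset.range (k-1), ∀ q ∈ Finset.range (k-1),
        (i + p) % k = (i + q) % k → p = q := by
      intro p hp q hq hpq
      simp only [Finset.mem_range] at hp hq
      rw [modsmall k _ (by omega) (by omega), modsmall k _ (by omega) (by omega)] at hpq
      split_ifs at hpq <;> omega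
    have himg : ∑ j ∈ (Finset.range (k-1)).image (fun p => (i + p) % k),
        (F i j ((k:ℝ)-1) - F i j ((k:ℝ)-2))
        = ∑ p ∈ Finset.range (k-1),
          (F i ((i+p)%k) ((k:ℝ)-1) - F i ((i+p)%k) ((k:ℝ)-2)) :=
      Finset.sum_image hinj
    have hle1 : ∑ j ∈ (Finset.range (k-1)).image (fun p => (i + p) % k),
        (F i j ((k:ℝ)-1) - F i j ((k:ℝ)-2))
        ≤ ∑ j ∈ Finset.range k, (F i j ((k:ℝ)-1) - F i j ((k:ℝ)-2)) := by
      refine Finset.sum_le_sum_of_subset_of_nonneg hsub (fun j hj _ => ?_)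
      exact hterm j (Finset.mem_range.1 hj)
    have hteleq : ∑ p ∈ Finset.range (k-1),
        (F i ((i+p)%k) ((k:ℝ)-1) - F i ((i+p)%k) ((k:ℝ)-2))
        = ∑ p ∈ Finset.range (k-1),
          ((fun q : ℕ => F i i ((k:ℝ)-1-q)) p - (fun q : ℕ => F i i ((k:ℝ)-1-q)) (p+1)) := by
      refine Finset.sum_congr rfl (fun p hp => ?_)
      simp only [Finset.mem_range] at hp
      have h1 := hchain i hi p (by omega) ((k:ℝ)-1) (by linarith)
      have h2 := hchain i hi p (by omega) ((k:ℝ)-2) (by linarith)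
      have e2 : (k:ℝ)-2-(p:ℝ) = (k:ℝ)-1-((p+1:ℕ):ℝ) := by push_cast; ring
      simp only
      rw [h1, h2, e2]
    have hsumtel : ∑ p ∈ Finset.range (k-1),
        ((fun q : ℕ => F i i ((k:ℝ)-1-q)) p - (fun q : ℕ => F i i ((k:ℝ)-1-q)) (p+1))
        = F i i ((k:ℝ)-1) - F i i ((k:ℝ)-1-(k-1:ℕ)) := by
      rw [Finset.sum_range_sub' (f := fun q : ℕ => F i i ((k:ℝ)-1-q))]
      norm_num
    have hlast : F i i ((k:ℝ)-1-((k-1:ℕ):ℝ)) = 0 := by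
      apply hzero i hi i hi
      have : ((k-1:ℕ):ℝ) = (k:ℝ)-1 := by
        have h1 : (1:ℕ) ≤ k := by omega
        push_cast [h1]; ring
      rw [this]; linarith
    have := hGk1 i hi
    calc demandI i ≤ F i i ((k:ℝ)-1) := hGk1 i hi
      _ = F i i ((k:ℝ)-1) - F i i ((k:ℝ)-1-((k-1:ℕ):ℝ)) := by rw [hlast]; ring
      _ = ∑ p ∈ Finset.range (k-1),
          (F i ((i+p)%k) ((k:ℝ)-1) - F i ((i+p)%k) ((k:ℝ)-2)) := by
          rw [hteleq, hsumtel]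
      _ = ∑ j ∈ (Finset.range (k-1)).image (fun p => (i + p) % k),
          (F i j ((k:ℝ)-1) - F i j ((k:ℝ)-2)) := himg.symm
      _ ≤ _ := hle1
  -- final contradiction
  have hsumd : ∑ i ∈ Finset.range k, demandI i = (k:ℝ) + 1 := by
    have : ∀ i ∈ Finset.range k, demandI i = (if i = 0 then (1:ℝ) else 0) + 1 := by
      intro i _
      simp only [demandI]
      split_ifs <;> norm_num
    rw [Finset.sum_congr rfl this, Finset.sum_add_distrib, Finset.sum_ite_eq',
      if_pos (Finset.mem_range.2 (show 0 < k by omega)), Finset.sum_const,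
      Finset.card_range, nsmul_eq_mul, mul_one]
    ring
  have htotal : ∑ i ∈ Finset.range k, demandI i
      ≤ ∑ i ∈ Finset.range k, ∑ j ∈ Finset.range k, (F i j ((k:ℝ)-1) - F i j ((k:ℝ)-2)) :=
    Finset.sum_le_sum (fun i hi => htele i (Finset.mem_range.1 hi))
  rw [Finset.sum_comm] at htotal
  have hcapsum : ∑ j ∈ Finset.range k, ∑ i ∈ Finset.range k,
      (F i j ((k:ℝ)-1) - F i j ((k:ℝ)-2)) ≤ ∑ j ∈ Finset.range k, (1:ℝ) :=
    Finset.sum_le_sum (fun j hj => hcapw j (Finset.mem_range.1 hj))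
  rw [Finset.sum_const, Finset.card_range, nsmul_eq_mul, mul_one] at hcapsum
  rw [hsumd] at htotal
  linarith

/-- For every `ε > 0` there is `k ≥ 3` such that for the instance `I_k`:
(a) there is a multi-commodity flow over time (storage permitted) with time horizon `k + 1`;
(b) every multi-commodity flow over time without intermediate storage has time horizon
strictly greater than `2k - 2`; and (c) `2k - 2 > (2 - ε) (k + 1)`.
Hence the speed-up through storage can be arbitrarily close to the factor `2`. -/
theorem speedup_through_storage_close_to_two (ε : ℝ) (hε : 0 < ε) :
    ∃ k : ℕ, 3 ≤ k ∧
      (∃ f : ℕ → ℕ → ℝ → ℝ, IsMCFlow k ((k : ℝ) + 1) demandI f) ∧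
      (∀ (T : ℝ) (f : ℕ → ℕ → ℝ → ℝ),
        IsMCFlow k T demandI f → NoStorage k T f → 2 * (k : ℝ) - 2 < T) ∧
      (2 - ε) * ((k : ℝ) + 1) < 2 * (k : ℝ) - 2 := by
  refine ⟨max 3 ⌈4/ε⌉₊, le_max_left _ _,
    exists_flow _ (le_max_left _ _),
    fun T f hf hns => no_storage_bound _ (le_max_left _ _) T f hf hns, ?_⟩
  set k := max 3 ⌈4/ε⌉₊ with hkdef
  have hk3 : (3:ℝ) ≤ (k:ℝ) := by exact_mod_cast le_max_left 3 ⌈4/ε⌉₊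
  have h1 : (4/ε) ≤ (⌈4/ε⌉₊ : ℝ) := Nat.le_ceil _
  have h2 : ((⌈4/ε⌉₊:ℕ):ℝ) ≤ (k:ℝ) := by exact_mod_cast le_max_right 3 ⌈4/ε⌉₊
  have h3 : 4/ε ≤ (k:ℝ) := le_trans h1 h2
  have h4 : 4 ≤ ε * (k:ℝ) := by
    have := mul_le_mul_of_nonneg_left h3 (le_of_lt hε)
    rwa [mul_div_cancel₀ _ (ne_of_gt hε)] at this
  nlinarith [h4, hε]
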